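/- arXiv:2510.05028 — 3 statements merged into one kernel-verified Lean document; each statement's English description precedes it below -/
import Mathlib

section
/- Let X be a finite type, let D be a probability mass function on X, let s ≥ 1 be a natural number, let G be a probability mass function on X^s, let ε ∈ [0,1) and κ ≥ 0 be reals, and let A ⊆ X^s be a set such that: (i) G(A) ≥ 1 − ε, and (ii) for every Y = (y₁,…,y_s) ∈ A with G(Y) > 0, G(Y) ≤ 2^κ · ∏_{i=1}^{s} D(yᵢ). Define the averaged marginal Marginal_G := (1/s) ∑_{i=1}^{s} Gᵢ, where Gᵢ is the i-th marginal of G. Then the total variation distance satisfies Δ(D, Marginal_G) ≤ ε + sqrt( 2·(log₂(1/(1−ε)) + κ) / s ). -/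
attribute [local instance] Classical.propDecidable

open Finset Real

set_option maxHeartbeats 1600000

/-- Gibbs' inequality (one-sided, subprobability reference). -/
lemma aux_gibbs {α : Type*} [Fintype α] (f g : α → ℝ) (hf : ∀ x, 0 ≤ f x)
    (hg : ∀ x, 0 ≤ g x) (hfg : ∀ x, 0 < f x → 0 < g x)
    (hf1 : ∑ x, f x = 1) (hg1 : ∑ x, g x ≤ 1) :
    0 ≤ ∑ x, f x * Real.log (f x / g x) := by
  have key : ∀ x, f x - g x ≤ f x * Real.log (f x / g x) := by
    intro x
    rcases eq_or_lt_of_le (hf x) with h | h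
    · simp [← h, hg x]
    · have hgx := hfg x h
      have hlog : Real.log (g x / f x) ≤ g x / f x - 1 :=
        Real.log_le_sub_one_of_pos (by positivity)
      have hrw : Real.log (f x / g x) = -Real.log (g x / f x) := by
        rw [Real.log_div h.ne' hgx.ne', Real.log_div hgx.ne' h.ne']; ring
      have h2 : f x * (g x / f x) = g x := by field_simp
      nlinarith [mul_le_mul_of_nonneg_left hlog h.le]
  have h3 : ∑ x, (f x - g x) ≤ ∑ x, f x * Real.log (f x / g x) :=
    Finset.sum_le_sum fun x _ => key x
  rw [Finset.sum_sub_distrib, hf1] at h3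
  linarith

/-- Pointwise Hellinger bound. -/
lemma aux_pt (f g : ℝ) (hf : 0 ≤ f) (hg : 0 ≤ g) (hfg : 0 < f → 0 < g) :
    (Real.sqrt f - Real.sqrt g) ^ 2 + f - g ≤ f * Real.log (f / g) := by
  rcases eq_or_lt_of_le hf with h | h
  · have : Real.sqrt g ^ 2 = g := Real.sq_sqrt hg
    simp only [← h, Real.sqrt_zero]
    nlinarith
  · have hg' := hfg h
    have h1 : Real.log (Real.sqrt (g / f)) ≤ Real.sqrt (g / f) - 1 :=
      Real.log_le_sub_one_of_pos (Real.sqrt_pos.2 (by positivity))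
    have h2 : Real.log (f / g) = -2 * Real.log (Real.sqrt (g / f)) := by
      rw [Real.log_sqrt (by positivity), Real.log_div hg'.ne' h.ne',
        Real.log_div h.ne' hg'.ne']; ring
    have h3 : f * Real.sqrt (g / f) = Real.sqrt (f * g) := by
      rw [show f * Real.sqrt (g / f) = Real.sqrt (f ^ 2) * Real.sqrt (g / f) by
        rw [Real.sqrt_sq hf], ← Real.sqrt_mul (by positivity)]
      congr 1; field_simp
    have h4 : (Real.sqrt f - Real.sqrt g) ^ 2 = f + g - 2 * Real.sqrt (f * g) := by
      have e1 : Real.sqrt f ^ 2 = f := Real.sq_sqrt hf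
      have e2 : Real.sqrt g ^ 2 = g := Real.sq_sqrt hg
      have e3 : Real.sqrt (f * g) = Real.sqrt f * Real.sqrt g := Real.sqrt_mul hf g
      nlinarith
    nlinarith [mul_le_mul_of_nonneg_left h1 h.le]

/-- Weak Pinsker: TV² ≤ KL (nats), via Hellinger. -/
lemma aux_pinsker {α : Type*} [Fintype α] (f g : α → ℝ) (hf : ∀ x, 0 ≤ f x)
    (hg : ∀ x, 0 ≤ g x) (hfg : ∀ x, 0 < f x → 0 < g x)
    (hf1 : ∑ x, f x = 1) (hg1 : ∑ x, g x = 1) :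
    ((1 / 2) * ∑ x, |f x - g x|) ^ 2 ≤ ∑ x, f x * Real.log (f x / g x) := by
  have hH : ∑ x, (Real.sqrt (f x) - Real.sqrt (g x)) ^ 2
      ≤ ∑ x, f x * Real.log (f x / g x) := by
    have h := Finset.sum_le_sum fun x (_ : x ∈ Finset.univ) =>
      aux_pt (f x) (g x) (hf x) (hg x) (hfg x)
    have e : ∑ x, ((Real.sqrt (f x) - Real.sqrt (g x)) ^ 2 + f x - g x)
        = ∑ x, (Real.sqrt (f x) - Real.sqrt (g x)) ^ 2 := by
      simp_rw [add_sub_assoc, Finset.sum_add_distrib, Finset.sum_sub_distrib, hf1, hg1]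
      ring
    linarith [h, e.symm.le]
  have he : ∀ x, |Real.sqrt (f x) - Real.sqrt (g x)| * (Real.sqrt (f x) + Real.sqrt (g x))
      = |f x - g x| := by
    intro x
    rw [← abs_of_nonneg (add_nonneg (Real.sqrt_nonneg (f x)) (Real.sqrt_nonneg (g x))),
      ← abs_mul]
    congr 1
    have e1 : Real.sqrt (f x) ^ 2 = f x := Real.sq_sqrt (hf x)
    have e2 : Real.sqrt (g x) ^ 2 = g x := Real.sq_sqrt (hg x)
    nlinarith
  have hCS := Finset.sum_mul_sq_le_sq_mul_sq Finset.univ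
    (fun x => |Real.sqrt (f x) - Real.sqrt (g x)|) (fun x => Real.sqrt (f x) + Real.sqrt (g x))
  simp only [he, sq_abs] at hCS
  have hv : ∑ x, (Real.sqrt (f x) + Real.sqrt (g x)) ^ 2 ≤ 4 := by
    have step : ∀ x ∈ Finset.univ,
        (Real.sqrt (f x) + Real.sqrt (g x)) ^ 2 ≤ 2 * (f x + g x) := by
      intro x _
      nlinarith [Real.sq_sqrt (hf x), Real.sq_sqrt (hg x), Real.sqrt_nonneg (f x),
        Real.sqrt_nonneg (g x), sq_nonneg (Real.sqrt (f x) - Real.sqrt (g x))]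
    calc ∑ x, (Real.sqrt (f x) + Real.sqrt (g x)) ^ 2 ≤ ∑ x, 2 * (f x + g x) :=
          Finset.sum_le_sum step
      _ = 4 := by rw [← Finset.mul_sum, Finset.sum_add_distrib, hf1, hg1]; norm_num
  have hA : (0:ℝ) ≤ ∑ x, (Real.sqrt (f x) - Real.sqrt (g x)) ^ 2 :=
    Finset.sum_nonneg fun x _ => sq_nonneg _
  nlinarith [hCS, hv, hA, hH]

/-- Sum over function space of a product equals product of sums. -/
lemma aux_sum_prod {ι X : Type*} [Fintype ι] [DecidableEq ι] [Fintype X] (f : ι → X → ℝ) :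
    ∑ Y : ι → X, ∏ i, f i (Y i) = ∏ i, ∑ x, f i x := by
  rw [← Fintype.piFinset_univ, Finset.sum_prod_piFinset]

/-- Marginal of a product distribution. -/
lemma aux_marg_prod {X : Type*} [Fintype X] (D : X → ℝ) (hD1 : ∑ x, D x = 1)
    {s : ℕ} (i : Fin s) (x : X) :
    ∑ Y : Fin s → X, (if Y i = x then ∏ j, D (Y j) else 0) = D x := by
  have key : ∀ Y : Fin s → X, (if Y i = x then ∏ j, D (Y j) else 0)
      = ∏ j, (if j = i then (if Y j = x then D (Y j) else 0) else D (Y j)) := by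
    intro Y
    by_cases h : Y i = x
    · rw [if_pos h]
      refine Finset.prod_congr rfl fun j _ => ?_
      by_cases hj : j = i
      · subst hj; rw [if_pos rfl, if_pos h]
      · rw [if_neg hj]
    · rw [if_neg h]
      refine (Finset.prod_eq_zero (Finset.mem_univ i) ?_).symm
      rw [if_pos rfl, if_neg h]
  simp_rw [key]
  have h2 := aux_sum_prod (fun (j : Fin s) (y : X) =>
    if j = i then (if y = x then D y else 0) else D y)
  beta_reduce at h2
  refine h2.trans ?_
  have e : ∀ j : Fin s, (∑ y : X, if j = i then (if y = x then D y else 0) else D y)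
      = if j = i then D x else 1 := by
    intro j
    by_cases hj : j = i
    · simp [hj, Finset.sum_ite_eq' Finset.univ x D]
    · simp [hj, hD1]
  simp_rw [e]
  simp

/-- Regrouping a sum over tuples by the value of one coordinate. -/
lemma aux_fiber {X : Type*} [Fintype X] {s : ℕ} (P : (Fin s → X) → ℝ)
    (i : Fin s) (h : X → ℝ) :
    ∑ Y : Fin s → X, P Y * h (Y i)
      = ∑ x : X, (∑ Y : Fin s → X, if Y i = x then P Y else 0) * h x := by
  simp_rw [Finset.sum_mul, ite_mul, zero_mul]
  rw [Finset.sum_comm]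
  refine Finset.sum_congr rfl fun Y _ => ?_
  simp [Finset.sum_ite_eq Finset.univ (Y i) (fun x => P Y * h x)]

/-- **Adaptation of Aaronson's lemma (abstract form).**
Let `D` be a PMF on a finite type `X`, let `G` be a PMF on `X^s` (`s ≥ 1`), let
`ε ∈ [0,1)` and `κ ≥ 0`, and let `A` be a set of tuples such that `G(A) ≥ 1 - ε` and
`G Y ≤ 2^κ * ∏ i, D (Y i)` for every `Y ∈ A` with `G Y > 0`. Then the total variation
distance between `D` and the averaged marginal `(1/s) ∑ᵢ Gᵢ` of `G` is at most
`ε + sqrt (2 * (log₂ (1/(1-ε)) + κ) / s)`. -/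
theorem tv_dist_averaged_marginal_le {X : Type*} [Fintype X]
    (D : X → ℝ) (hD0 : ∀ x, 0 ≤ D x) (hD1 : ∑ x, D x = 1)
    (s : ℕ) (hs : 1 ≤ s)
    (G : (Fin s → X) → ℝ)
    (hG0 : ∀ Y, 0 ≤ G Y) (hG1 : ∑ Y : Fin s → X, G Y = 1)
    (ε κ : ℝ) (hε0 : 0 ≤ ε) (hε1 : ε < 1) (hκ : 0 ≤ κ)
    (A : Finset (Fin s → X))
    (hGA : 1 - ε ≤ ∑ Y ∈ A, G Y)
    (hdom : ∀ Y ∈ A, 0 < G Y → G Y ≤ (2 : ℝ) ^ κ * ∏ i : Fin s, D (Y i)) :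
    (1 / 2) * ∑ x : X,
        |D x - (1 / (s : ℝ)) * ∑ i : Fin s,
            (∑ Y : Fin s → X, if Y i = x then G Y else 0)|
      ≤ ε + Real.sqrt (2 * (Real.logb 2 (1 / (1 - ε)) + κ) / (s : ℝ)) := by
  have hs0 : (0:ℝ) < (s:ℝ) := by exact_mod_cast Nat.lt_of_lt_of_le Nat.zero_lt_one hs
  set M : ℝ := ∑ Y ∈ A, G Y with hMdef
  have hM1 : M ≤ 1 := by
    rw [← hG1]
    exact Finset.sum_le_sum_of_subset_of_nonneg (Finset.subset_univ A)
      (fun Y _ _ => hG0 Y)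
  have hM0 : (0:ℝ) < M := lt_of_lt_of_le (by linarith) hGA
  set P : (Fin s → X) → ℝ := fun Y => (if Y ∈ A then G Y else 0) / M with hPdef
  set Q : (Fin s → X) → ℝ := fun Y => ∏ i, D (Y i) with hQdef
  set C : ℝ := (2:ℝ) ^ κ / M with hCdef
  have h2κ : (1:ℝ) ≤ (2:ℝ) ^ κ := by
    rw [show (1:ℝ) = (2:ℝ) ^ (0:ℝ) from (Real.rpow_zero 2).symm]
    exact Real.rpow_le_rpow_of_exponent_le one_le_two hκ
  have hC1 : (1:ℝ) ≤ C := (le_div_iff₀ hM0).2 (by linarith)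
  have hC0 : (0:ℝ) < C := lt_of_lt_of_le one_pos hC1
  have hP0 : ∀ Y, 0 ≤ P Y := by
    intro Y
    refine div_nonneg ?_ hM0.le
    split <;> first | exact hG0 Y | exact le_rfl
  have hP1 : ∑ Y : Fin s → X, P Y = 1 := by
    rw [hPdef, ← Finset.sum_div, Finset.sum_ite_mem, Finset.univ_inter, ← hMdef]
    exact div_self hM0.ne'
  have hQ0 : ∀ Y, 0 ≤ Q Y := fun Y => Finset.prod_nonneg fun i _ => hD0 _
  have hPQ : ∀ Y, P Y ≤ C * Q Y := by
    intro Y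
    by_cases hYA : Y ∈ A
    · rcases (hG0 Y).lt_or_eq with hGY | hGY
      · have := hdom Y hYA hGY
        rw [hPdef, hCdef]
        simp only [if_pos hYA]
        rw [div_mul_eq_mul_div, div_le_div_iff₀ hM0 hM0]
        have hq : (0:ℝ) ≤ Q Y := hQ0 Y
        nlinarith
      · rw [hPdef]
        simp only [← hGY, if_pos hYA, zero_div]
        exact mul_nonneg hC0.le (hQ0 Y)
    · rw [hPdef]
      simp only [if_neg hYA, zero_div]
      exact mul_nonneg hC0.le (hQ0 Y)
  set Pm : Fin s → X → ℝ := fun i x => ∑ Y : Fin s → X, if Y i = x then P Y else 0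
    with hPmdef
  have hPm0 : ∀ i x, 0 ≤ Pm i x := by
    intro i x
    refine Finset.sum_nonneg fun Y _ => ?_
    split <;> first | exact hP0 Y | exact le_rfl
  have hPm1 : ∀ i, ∑ x, Pm i x = 1 := by
    intro i
    rw [hPmdef, Finset.sum_comm, ← hP1]
    refine Finset.sum_congr rfl fun Y _ => ?_
    simp
  have hPmC : ∀ i x, Pm i x ≤ C * D x := by
    intro i x
    have h1 : Pm i x ≤ ∑ Y : Fin s → X, if Y i = x then C * Q Y else 0 := by
      refine Finset.sum_le_sum fun Y _ => ?_
      split <;> first | exact hPQ Y | exact le_rfl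
    have h2 : ∑ Y : Fin s → X, (if Y i = x then C * Q Y else 0)
        = C * ∑ Y : Fin s → X, (if Y i = x then Q Y else 0) := by
      rw [Finset.mul_sum]
      exact Finset.sum_congr rfl fun Y _ => by split <;> simp
    rw [h2, hQdef] at h1
    rwa [aux_marg_prod D hD1 i x] at h1
  have hPmD : ∀ i x, 0 < Pm i x → 0 < D x := by
    intro i x h
    rcases (hD0 x).lt_or_eq with h' | h'
    · exact h'
    · exfalso; have := hPmC i x; rw [← h'] at this; nlinarith
  have hQpos : ∀ Y, 0 < P Y → 0 < Q Y := by
    intro Y h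
    rcases (hQ0 Y).lt_or_eq with h' | h'
    · exact h'
    · exfalso; have := hPQ Y; rw [← h'] at this; nlinarith
  have hDpos : ∀ Y, 0 < P Y → ∀ i, 0 < D (Y i) := by
    intro Y h i
    rcases (hD0 (Y i)).lt_or_eq with h' | h'
    · exact h'
    · exfalso
      have : Q Y = 0 := by
        rw [hQdef]
        exact Finset.prod_eq_zero (Finset.mem_univ i) h'.symm
      have := hQpos Y h
      linarith
  have hPmpos : ∀ Y, 0 < P Y → ∀ i, 0 < Pm i (Y i) := by
    intro Y h i
    refine lt_of_lt_of_le h ?_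
    have : P Y = (if Y i = Y i then P Y else 0) := by simp
    rw [this]
    refine Finset.single_le_sum (f := fun Y' => if Y' i = Y i then P Y' else 0)
      (fun Y' _ => ?_) (Finset.mem_univ Y)
    beta_reduce
    split <;> first | exact hP0 Y' | exact le_rfl
  set R : (Fin s → X) → ℝ := fun Y => ∏ i, Pm i (Y i) with hRdef
  have hR0 : ∀ Y, 0 ≤ R Y := fun Y => Finset.prod_nonneg fun i _ => hPm0 _ _
  have hR1 : ∑ Y : Fin s → X, R Y = 1 := by
    rw [hRdef]
    have h2 := aux_sum_prod (fun (i : Fin s) (x : X) => Pm i x)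
    beta_reduce at h2
    refine h2.trans ?_
    simp [hPm1]
  have hRpos : ∀ Y, 0 < P Y → 0 < R Y := fun Y h =>
    Finset.prod_pos fun i _ => hPmpos Y h i
  have hgibbs : 0 ≤ ∑ Y : Fin s → X, P Y * Real.log (P Y / R Y) :=
    aux_gibbs P R hP0 hR0 hRpos hP1 hR1.le
  -- chain-rule decomposition
  have hdecomp : ∑ Y : Fin s → X, P Y * Real.log (P Y / Q Y)
      = (∑ Y : Fin s → X, P Y * Real.log (P Y / R Y))
        + ∑ i : Fin s, ∑ x : X, Pm i x * Real.log (Pm i x / D x) := by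
    have hterm : ∀ Y : Fin s → X, P Y * Real.log (P Y / Q Y)
        = P Y * Real.log (P Y / R Y)
          + ∑ i : Fin s, P Y * Real.log (Pm i (Y i) / D (Y i)) := by
      intro Y
      rcases (hP0 Y).lt_or_eq with h | h
      · have hq := hQpos Y h
        have hr := hRpos Y h
        have hd := hDpos Y h
        have hpm := hPmpos Y h
        have hlogQ : Real.log (Q Y) = ∑ i : Fin s, Real.log (D (Y i)) := by
          rw [hQdef]
          exact Real.log_prod fun i _ => (hd i).ne'
        have hlogR : Real.log (R Y) = ∑ i : Fin s, Real.log (Pm i (Y i)) := by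
          rw [hRdef]
          exact Real.log_prod fun i _ => (hpm i).ne'
        have e1 : ∀ i : Fin s, Real.log (Pm i (Y i) / D (Y i))
            = Real.log (Pm i (Y i)) - Real.log (D (Y i)) :=
          fun i => Real.log_div (hpm i).ne' (hd i).ne'
        rw [Real.log_div h.ne' hq.ne', Real.log_div h.ne' hr.ne']
        simp_rw [e1]
        rw [← Finset.mul_sum, Finset.sum_sub_distrib, ← hlogQ, ← hlogR]
        ring
      · simp [← h]
    rw [Finset.sum_congr rfl fun Y _ => hterm Y, Finset.sum_add_distrib]
    congr 1
    rw [Finset.sum_comm]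
    refine Finset.sum_congr rfl fun i _ => ?_
    exact aux_fiber P i (fun x => Real.log (Pm i x / D x))
  have hklP : ∑ Y : Fin s → X, P Y * Real.log (P Y / Q Y) ≤ Real.log C := by
    have h1 : ∀ Y : Fin s → X, P Y * Real.log (P Y / Q Y) ≤ P Y * Real.log C := by
      intro Y
      rcases (hP0 Y).lt_or_eq with h | h
      · have hq := hQpos Y h
        have hle : P Y / Q Y ≤ C := (div_le_iff₀ hq).2 (by linarith [hPQ Y, mul_comm C (Q Y)])
        exact mul_le_mul_of_nonneg_left (Real.log_le_log (by positivity) hle) h.le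
      · rw [← h]; simp
    calc ∑ Y : Fin s → X, P Y * Real.log (P Y / Q Y)
        ≤ ∑ Y : Fin s → X, P Y * Real.log C := Finset.sum_le_sum fun Y _ => h1 Y
      _ = Real.log C := by rw [← Finset.sum_mul, hP1, one_mul]
  have hkl_le : ∑ i : Fin s, ∑ x : X, Pm i x * Real.log (Pm i x / D x) ≤ Real.log C := by
    rw [hdecomp] at hklP; linarith
  have hPin : ∀ i : Fin s, ((1/2) * ∑ x : X, |Pm i x - D x|) ^ 2
      ≤ ∑ x : X, Pm i x * Real.log (Pm i x / D x) :=
    fun i => aux_pinsker (Pm i) D (hPm0 i) hD0 (hPmD i) (hPm1 i) hD1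
  set δ : Fin s → ℝ := fun i => (1/2) * ∑ x : X, |Pm i x - D x| with hδdef
  have hδ0 : ∀ i, 0 ≤ δ i := by
    intro i
    have : (0:ℝ) ≤ ∑ x : X, |Pm i x - D x| := Finset.sum_nonneg fun x _ => abs_nonneg _
    rw [hδdef]; positivity
  have hδsq : ∑ i : Fin s, δ i ^ 2 ≤ Real.log C :=
    le_trans (Finset.sum_le_sum fun i _ => hPin i) hkl_le
  have hCS : (∑ i : Fin s, δ i) ^ 2 ≤ (s:ℝ) * Real.log C := by
    have h := Finset.sum_mul_sq_le_sq_mul_sq Finset.univ (fun _ : Fin s => (1:ℝ)) δ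
    simp only [one_mul, one_pow, Finset.sum_const, Finset.card_univ, Fintype.card_fin,
      nsmul_eq_mul, mul_one] at h
    calc (∑ i : Fin s, δ i) ^ 2 ≤ (s:ℝ) * ∑ i : Fin s, δ i ^ 2 := h
      _ ≤ (s:ℝ) * Real.log C := by nlinarith
  have havg : (1/(s:ℝ)) * ∑ i : Fin s, δ i ≤ Real.sqrt (Real.log C / (s:ℝ)) := by
    rw [Real.le_sqrt (mul_nonneg (by positivity)
        (Finset.sum_nonneg fun i _ => hδ0 i))
      (div_nonneg (Real.log_nonneg hC1) hs0.le)]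
    have h2 : ((1/(s:ℝ)) * ∑ i : Fin s, δ i) ^ 2
        = (∑ i : Fin s, δ i) ^ 2 / (s:ℝ) ^ 2 := by ring
    rw [h2, div_le_div_iff₀ (by positivity) hs0]
    nlinarith [hCS, hs0]
  -- relate goal to Pm
  set Bm : Fin s → X → ℝ := fun i x =>
    ∑ Y : Fin s → X, if Y i = x then (if Y ∈ A then 0 else G Y) else 0 with hBmdef
  have hBm0 : ∀ i x, 0 ≤ Bm i x := by
    intro i x
    refine Finset.sum_nonneg fun Y _ => ?_
    split
    · split
      · exact le_rfl
      · exact hG0 Y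
    · exact le_rfl
  have hBmsum : ∀ i, ∑ x, Bm i x = 1 - M := by
    intro i
    rw [hBmdef, Finset.sum_comm]
    have e : ∀ Y : Fin s → X,
        (∑ x : X, if Y i = x then (if Y ∈ A then 0 else G Y) else 0)
        = G Y - (if Y ∈ A then G Y else 0) := by
      intro Y
      rw [Finset.sum_ite_eq Finset.univ (Y i)]
      simp only [Finset.mem_univ, if_true]
      split <;> ring
    rw [Finset.sum_congr rfl fun Y _ => e Y, Finset.sum_sub_distrib, hG1,
      Finset.sum_ite_mem, Finset.univ_inter]
  have hGm : ∀ (i : Fin s) (x : X), (∑ Y : Fin s → X, if Y i = x then G Y else 0)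
      = M * Pm i x + Bm i x := by
    intro i x
    rw [hPmdef, hBmdef, Finset.mul_sum, ← Finset.sum_add_distrib]
    refine Finset.sum_congr rfl fun Y _ => ?_
    by_cases h : Y i = x
    · simp only [if_pos h, hPdef]
      by_cases hA' : Y ∈ A
      · simp only [if_pos hA']
        field_simp
        ring
      · simp only [if_neg hA']
        field_simp
        ring
    · simp [if_neg h]
  have hPmsum1 : ∀ x, |D x - (1/(s:ℝ)) * ∑ i, (∑ Y : Fin s → X, if Y i = x then G Y else 0)|
      ≤ (1/(s:ℝ)) * ∑ i, |D x - Pm i x|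
        + (1/(s:ℝ)) * ∑ i, ((1-M) * Pm i x + Bm i x) := by
    intro x
    have e : D x - (1/(s:ℝ)) * ∑ i, (∑ Y : Fin s → X, if Y i = x then G Y else 0)
        = (1/(s:ℝ)) * ∑ i, (D x - Pm i x)
          + (1/(s:ℝ)) * ∑ i, ((1-M) * Pm i x - Bm i x) := by
      rw [Finset.sum_congr rfl fun i _ => hGm i x]
      have e1 : ∑ i : Fin s, (M * Pm i x + Bm i x)
          = M * (∑ i : Fin s, Pm i x) + ∑ i : Fin s, Bm i x := by
        rw [Finset.sum_add_distrib, Finset.mul_sum]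
      have e2 : ∑ i : Fin s, (D x - Pm i x)
          = (s:ℝ) * D x - ∑ i : Fin s, Pm i x := by
        rw [Finset.sum_sub_distrib, Finset.sum_const, Finset.card_univ,
          Fintype.card_fin, nsmul_eq_mul]
      have e3 : ∑ i : Fin s, ((1-M) * Pm i x - Bm i x)
          = (1-M) * (∑ i : Fin s, Pm i x) - ∑ i : Fin s, Bm i x := by
        rw [Finset.sum_sub_distrib, Finset.mul_sum]
      rw [e1, e2, e3]
      field_simp
      ring
    rw [e]
    refine le_trans (abs_add_le _ _) (add_le_add ?_ ?_)
    · rw [abs_mul, abs_of_nonneg (show (0:ℝ) ≤ 1/(s:ℝ) by positivity)]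
      exact mul_le_mul_of_nonneg_left (Finset.abs_sum_le_sum_abs _ _) (by positivity)
    · rw [abs_mul, abs_of_nonneg (show (0:ℝ) ≤ 1/(s:ℝ) by positivity)]
      refine mul_le_mul_of_nonneg_left ?_ (by positivity)
      refine le_trans (Finset.abs_sum_le_sum_abs _ _) (Finset.sum_le_sum fun i _ => ?_)
      have h1 : 0 ≤ (1-M) * Pm i x := mul_nonneg (by linarith) (hPm0 i x)
      have h2 := hBm0 i x
      calc |(1-M) * Pm i x - Bm i x| ≤ |(1-M) * Pm i x| + |Bm i x| := abs_sub _ _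
        _ = (1-M) * Pm i x + Bm i x := by rw [abs_of_nonneg h1, abs_of_nonneg h2]
  -- put the TV bound together
  have hTV : (1 / 2) * ∑ x : X,
        |D x - (1 / (s : ℝ)) * ∑ i : Fin s,
            (∑ Y : Fin s → X, if Y i = x then G Y else 0)|
      ≤ (1/(s:ℝ)) * ∑ i : Fin s, δ i + (1 - M) := by
    have h1 := Finset.sum_le_sum fun x (_ : x ∈ Finset.univ) => hPmsum1 x
    have h2 : ∑ x : X, ((1/(s:ℝ)) * ∑ i, |D x - Pm i x|
        + (1/(s:ℝ)) * ∑ i, ((1-M) * Pm i x + Bm i x))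
        = (1/(s:ℝ)) * ∑ i : Fin s, (2 * δ i) + (1/(s:ℝ)) * ((s:ℝ) * (1-M) + (s:ℝ) * (1-M)) := by
      rw [Finset.sum_add_distrib, ← Finset.mul_sum, ← Finset.mul_sum]
      congr 1
      · congr 1
        rw [Finset.sum_comm]
        refine Finset.sum_congr rfl fun i _ => ?_
        rw [hδdef]
        simp only
        rw [Finset.sum_congr rfl fun x (_ : x ∈ Finset.univ) => (abs_sub_comm (D x) (Pm i x))]
        ring
      · congr 1
        rw [Finset.sum_comm]
        have : ∀ i : Fin s, ∑ x : X, ((1-M) * Pm i x + Bm i x) = (1-M) + (1-M) := by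
          intro i
          rw [Finset.sum_add_distrib, ← Finset.mul_sum, hPm1 i, hBmsum i, mul_one]
        rw [Finset.sum_congr rfl fun i _ => this i, Finset.sum_const, Finset.card_univ,
          Fintype.card_fin, nsmul_eq_mul]
        ring
    calc (1 / 2) * ∑ x : X, |D x - (1 / (s : ℝ)) * ∑ i : Fin s,
            (∑ Y : Fin s → X, if Y i = x then G Y else 0)|
        ≤ (1 / 2) * ((1/(s:ℝ)) * ∑ i : Fin s, (2 * δ i)
            + (1/(s:ℝ)) * ((s:ℝ) * (1-M) + (s:ℝ) * (1-M))) := by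
          rw [← h2]
          exact mul_le_mul_of_nonneg_left h1 (by norm_num)
      _ = (1/(s:ℝ)) * ∑ i : Fin s, δ i + (1 - M) := by
          rw [show ∑ i : Fin s, (2 * δ i) = 2 * ∑ i : Fin s, δ i from
            (Finset.mul_sum _ _ _).symm]
          field_simp
          ring
  -- final numeric bound
  have hfinal : Real.sqrt (Real.log C / (s:ℝ))
      ≤ Real.sqrt (2 * (Real.logb 2 (1 / (1 - ε)) + κ) / (s : ℝ)) := by
    refine Real.sqrt_le_sqrt ?_
    rw [div_le_div_iff₀ hs0 hs0]
    have hlog2 : Real.log 2 ≤ 1 := by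
      have := Real.log_le_sub_one_of_pos (by norm_num : (0:ℝ) < 2)
      linarith
    have hlog2' : 0 < Real.log 2 := Real.log_pos (by norm_num)
    have h1ε : (0:ℝ) < 1 - ε := by linarith
    have hlogM : Real.log (1 - ε) ≤ Real.log M := Real.log_le_log h1ε hGA
    have hlogC : Real.log C = κ * Real.log 2 - Real.log M := by
      rw [hCdef, Real.log_div (by positivity) hM0.ne', Real.log_rpow (by norm_num)]
    have hlogb : Real.logb 2 (1 / (1 - ε)) = -Real.log (1 - ε) / Real.log 2 := by
      rw [Real.logb, Real.log_div one_ne_zero h1ε.ne', Real.log_one]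
      ring
    have hlognn : 0 ≤ -Real.log (1 - ε) := by
      have : Real.log (1 - ε) ≤ 0 := Real.log_nonpos (by linarith) (by linarith)
      linarith
    rw [hlogC, hlogb]
    have key : κ * Real.log 2 - Real.log M ≤ 2 * (-Real.log (1 - ε) / Real.log 2 + κ) := by
      have h2 : -Real.log (1 - ε) ≤ 2 * (-Real.log (1 - ε)) / Real.log 2 := by
        rw [le_div_iff₀ hlog2']
        nlinarith
      have h3 : κ * Real.log 2 ≤ 2 * κ := by nlinarith
      have h4 : -Real.log M ≤ -Real.log (1 - ε) := by linarith
      linarith [h2, h3, h4,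
        show 2 * (-Real.log (1 - ε)) / Real.log 2 = 2 * (-Real.log (1-ε) / Real.log 2) from by ring]
    nlinarith [key, hs0]
  calc (1 / 2) * ∑ x : X,
        |D x - (1 / (s : ℝ)) * ∑ i : Fin s,
            (∑ Y : Fin s → X, if Y i = x then G Y else 0)|
      ≤ (1/(s:ℝ)) * ∑ i : Fin s, δ i + (1 - M) := hTV
    _ ≤ Real.sqrt (Real.log C / (s:ℝ)) + ε := by
        have : 1 - M ≤ ε := by linarith
        linarith [havg]
    _ ≤ ε + Real.sqrt (2 * (Real.logb 2 (1 / (1 - ε)) + κ) / (s : ℝ)) := by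
        linarith [hfinal]
end

section
/- For each n ∈ ℕ let Q_n and R_n be probability mass functions on the set of bit strings {0,1}^{m(n)}, where m : ℕ → ℕ, and suppose the total variation distance satisfies Δ(Q_n, R_n) ≥ 1 − ν(n) for a negligible function ν (i.e., for every k ∈ ℕ, ν(n) ≤ n^{−k} for all sufficiently large n). Then for every constant c > 0 there exists a function f : ℕ → ℝ with f(n)/log₂ n → ∞ as n → ∞ such that, for all sufficiently large n, Q_n({x : R_n(x) ≤ 2^{−f(n)} · Q_n(x)}) ≥ 1 − n^{−c}. Equivalently, with probability at least 1 − n^{−c} over x ← Q_n, one has −log₂ Q_n(x) + f(n) ≤ −log₂ R_n(x). -/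
attribute [local instance] Classical.propDecidable

open Filter

/-- If `Q n` and `R n` are PMFs on `{0,1}^{m n}` with total variation distance at least
`1 - ν n` for a negligible function `ν`, then for every constant `c > 0` there is a
function `f` with `f n / log₂ n → ∞` such that, for all sufficiently large `n`,
with probability at least `1 - n^{-c}` over `x ← Q n` we have
`R n x ≤ 2^{-f n} * Q n x` (i.e. `-log₂ (Q n x) + f n ≤ -log₂ (R n x)`). -/
theorem qas_complexity_gap (m : ℕ → ℕ)
    (Q R : (n : ℕ) → (Fin (m n) → Bool) → ℝ)
    (hQ0 : ∀ n x, 0 ≤ Q n x) (hQ1 : ∀ n, ∑ x, Q n x = 1)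
    (hR0 : ∀ n x, 0 ≤ R n x) (hR1 : ∀ n, ∑ x, R n x = 1)
    (ν : ℕ → ℝ)
    (hν : ∀ k : ℕ, ∃ N : ℕ, ∀ n ≥ N, ν n ≤ (n : ℝ) ^ (-(k : ℝ)))
    (hΔ : ∀ n, 1 - ν n ≤ (1 / 2) * ∑ x, |Q n x - R n x|) :
    ∀ c : ℝ, 0 < c → ∃ f : ℕ → ℝ,
      Tendsto (fun n => f n / Real.logb 2 (n : ℝ)) atTop atTop ∧
      ∃ N : ℕ, ∀ n ≥ N,
        1 - (n : ℝ) ^ (-c) ≤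
          ∑ x ∈ Finset.univ.filter
              (fun x => R n x ≤ (2 : ℝ) ^ (-f n) * Q n x), Q n x := by
  intro c hc
  -- modified negligible bound, strictly positive
  set ν' : ℕ → ℝ := fun n => max (ν n) ((n : ℝ) ^ (-(n : ℝ))) with hν'def
  have hν'pos : ∀ n, 0 < ν' n := by
    intro n
    rcases Nat.eq_zero_or_pos n with h | h
    · subst h
      have : ((0:ℕ) : ℝ) ^ (-((0:ℕ) : ℝ)) = 1 := by norm_num
      exact lt_max_of_lt_right (by rw [this]; norm_num)
    · exact lt_max_of_lt_right (Real.rpow_pos_of_pos (by exact_mod_cast h) _)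
  have hν'le : ∀ n, ν n ≤ ν' n := fun n => le_max_left _ _
  have hν'small : ∀ k : ℕ, ∃ N : ℕ, ∀ n ≥ N, ν' n ≤ (n : ℝ) ^ (-(k : ℝ)) := by
    intro k
    obtain ⟨N, hN⟩ := hν k
    refine ⟨max N (max k 2), fun n hn => ?_⟩
    have hnN : n ≥ N := le_trans (le_max_left _ _) hn
    have hnk : (k : ℝ) ≤ (n : ℝ) := by
      exact_mod_cast le_trans (le_trans (le_max_left _ _) (le_max_right N _)) hn
    have hn1 : (1 : ℝ) ≤ (n : ℝ) := by
      have : (2:ℕ) ≤ n := le_trans (le_trans (le_max_right _ _) (le_max_right N _)) hn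
      exact_mod_cast le_trans (by norm_num) this
    refine max_le (hN n hnN) ?_
    exact Real.rpow_le_rpow_of_exponent_le hn1 (by linarith)
  refine ⟨fun n => Real.logb 2 ((n : ℝ) ^ (-c) / ν' n), ?_, ?_⟩
  · -- tendsto
    rw [tendsto_atTop]
    intro b
    set k : ℕ := ⌈max (b + c) 0⌉₊ with hk
    have hbk : b + c ≤ (k : ℝ) := le_trans (le_max_left _ _) (Nat.le_ceil _)
    obtain ⟨N, hN⟩ := hν'small k
    filter_upwards [eventually_ge_atTop (max N 2)] with n hn
    have hnN : n ≥ N := le_trans (le_max_left _ _) hn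
    have hn2 : (2:ℕ) ≤ n := le_trans (le_max_right _ _) hn
    have hn1 : (1 : ℝ) < (n : ℝ) := by exact_mod_cast lt_of_lt_of_le (by norm_num) hn2
    have hlogpos : 0 < Real.logb 2 (n : ℝ) := Real.logb_pos (by norm_num) hn1
    have hnpos : (0:ℝ) < (n:ℝ) := by linarith
    have hrp : (0:ℝ) < (n:ℝ) ^ (-c) := Real.rpow_pos_of_pos hnpos _
    have key : ((k : ℝ) - c) * Real.logb 2 (n : ℝ) ≤
        Real.logb 2 ((n : ℝ) ^ (-c) / ν' n) := by
      have h1 : Real.logb 2 (ν' n) ≤ Real.logb 2 ((n:ℝ) ^ (-(k:ℝ))) :=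
        Real.logb_le_logb_of_le (by norm_num) (hν'pos n) (hN n hnN)
      have h2 : Real.logb 2 ((n:ℝ) ^ (-(k:ℝ))) = (-(k:ℝ)) * Real.logb 2 (n:ℝ) :=
        Real.logb_rpow_eq_mul_logb_of_pos hnpos
      have h3 : Real.logb 2 ((n:ℝ) ^ (-c)) = (-c) * Real.logb 2 (n:ℝ) :=
        Real.logb_rpow_eq_mul_logb_of_pos hnpos
      rw [Real.logb_div (ne_of_gt hrp) (ne_of_gt (hν'pos n)), h3]
      nlinarith [h1, h2]
    rw [le_div_iff₀ hlogpos]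
    calc b * Real.logb 2 (n:ℝ) ≤ ((k:ℝ) - c) * Real.logb 2 (n:ℝ) := by nlinarith
      _ ≤ _ := key
  · -- main bound
    set k0 : ℕ := ⌈c⌉₊ + 1 with hk0
    have hck0 : c ≤ (k0 : ℝ) := by
      push_cast [hk0]
      linarith [Nat.le_ceil c]
    obtain ⟨N0, hN0⟩ := hν'small k0
    refine ⟨max N0 2, fun n hn => ?_⟩
    have hnN : n ≥ N0 := le_trans (le_max_left _ _) hn
    have hn2 : (2:ℕ) ≤ n := le_trans (le_max_right _ _) hn
    have hn1 : (1 : ℝ) < (n : ℝ) := by exact_mod_cast lt_of_lt_of_le (by norm_num) hn2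
    have hnpos : (0:ℝ) < (n:ℝ) := by linarith
    have hrp : (0:ℝ) < (n:ℝ) ^ (-c) := Real.rpow_pos_of_pos hnpos _
    have hν'c : ν' n ≤ (n:ℝ) ^ (-c) :=
      le_trans (hN0 n hnN) (Real.rpow_le_rpow_of_exponent_le (le_of_lt hn1) (by linarith))
    set fn : ℝ := Real.logb 2 ((n : ℝ) ^ (-c) / ν' n) with hfn
    have hargpos : (0:ℝ) < (n : ℝ) ^ (-c) / ν' n := div_pos hrp (hν'pos n)
    have h2f : (2:ℝ) ^ fn = (n : ℝ) ^ (-c) / ν' n :=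
      Real.rpow_logb (by norm_num) (by norm_num) hargpos
    have hfnn : 0 ≤ fn := by
      apply Real.logb_nonneg (by norm_num)
      rw [le_div_iff₀ (hν'pos n)]
      linarith
    have h2negf : (2:ℝ) ^ (-fn) ≤ 1 :=
      Real.rpow_le_one_of_one_le_of_nonpos (by norm_num) (by linarith)
    have h2fpos : (0:ℝ) < (2:ℝ) ^ fn := Real.rpow_pos_of_pos (by norm_num) _
    have h2negfpos : (0:ℝ) < (2:ℝ) ^ (-fn) := Real.rpow_pos_of_pos (by norm_num) _
    have hmul : (2:ℝ) ^ fn * (2:ℝ) ^ (-fn) = 1 := by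
      rw [← Real.rpow_add (by norm_num)]
      simp
    -- sum of min bound
    have hmin : ∑ x, min (Q n x) (R n x) ≤ ν n := by
      have heq : ∀ x, min (Q n x) (R n x)
          = (Q n x + R n x - |Q n x - R n x|) / 2 := by
        intro x
        rcases le_total (Q n x) (R n x) with h | h
        · rw [min_eq_left h, abs_of_nonpos (by linarith)]; ring
        · rw [min_eq_right h, abs_of_nonneg (by linarith)]; ring
      have := hΔ n
      calc ∑ x, min (Q n x) (R n x)
          = ∑ x, (Q n x + R n x - |Q n x - R n x|) / 2 := by
            exact Finset.sum_congr rfl (fun x _ => heq x)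
        _ = (∑ x, Q n x + ∑ x, R n x - ∑ x, |Q n x - R n x|) / 2 := by
            rw [← Finset.sum_div, Finset.sum_sub_distrib, Finset.sum_add_distrib]
        _ ≤ ν n := by rw [hQ1 n, hR1 n]; linarith
    -- bad set bound
    set S := Finset.univ.filter (fun x => R n x ≤ (2 : ℝ) ^ (-fn) * Q n x) with hS
    have hsplit : ∑ x ∈ S, Q n x
        + ∑ x ∈ Finset.univ.filter (fun x => ¬ (R n x ≤ (2 : ℝ) ^ (-fn) * Q n x)), Q n x
        = 1 := by
      rw [Finset.sum_filter_add_sum_filter_not, hQ1 n]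
    have hbad : ∑ x ∈ Finset.univ.filter
        (fun x => ¬ (R n x ≤ (2 : ℝ) ^ (-fn) * Q n x)), Q n x ≤ (n:ℝ) ^ (-c) := by
      have hpt : ∀ x ∈ Finset.univ.filter
          (fun x => ¬ (R n x ≤ (2 : ℝ) ^ (-fn) * Q n x)),
          Q n x ≤ (2:ℝ) ^ fn * min (Q n x) (R n x) := by
        intro x hx
        rw [Finset.mem_filter] at hx
        have hxR : (2 : ℝ) ^ (-fn) * Q n x < R n x := lt_of_not_ge hx.2
        have hxQ : (2 : ℝ) ^ (-fn) * Q n x ≤ Q n x :=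
          mul_le_of_le_one_left (hQ0 n x) h2negf
        have hmle : (2 : ℝ) ^ (-fn) * Q n x ≤ min (Q n x) (R n x) :=
          le_min hxQ (le_of_lt hxR)
        calc Q n x = (2:ℝ) ^ fn * ((2:ℝ) ^ (-fn) * Q n x) := by
              rw [← mul_assoc, hmul, one_mul]
          _ ≤ (2:ℝ) ^ fn * min (Q n x) (R n x) := by
              exact mul_le_mul_of_nonneg_left hmle (le_of_lt h2fpos)
      calc ∑ x ∈ Finset.univ.filter
            (fun x => ¬ (R n x ≤ (2 : ℝ) ^ (-fn) * Q n x)), Q n x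
          ≤ ∑ x ∈ Finset.univ.filter
            (fun x => ¬ (R n x ≤ (2 : ℝ) ^ (-fn) * Q n x)),
              (2:ℝ) ^ fn * min (Q n x) (R n x) := Finset.sum_le_sum hpt
        _ ≤ ∑ x, (2:ℝ) ^ fn * min (Q n x) (R n x) := by
            apply Finset.sum_le_sum_of_subset_of_nonneg (Finset.filter_subset _ _)
            intro x _ _
            exact mul_nonneg (le_of_lt h2fpos) (le_min (hQ0 n x) (hR0 n x))
        _ = (2:ℝ) ^ fn * ∑ x, min (Q n x) (R n x) := by
            rw [Finset.mul_sum]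
        _ ≤ (2:ℝ) ^ fn * ν' n := by
            apply mul_le_mul_of_nonneg_left _ (le_of_lt h2fpos)
            exact le_trans hmin (hν'le n)
        _ = (n:ℝ) ^ (-c) := by
            rw [h2f, div_mul_cancel₀]
            exact ne_of_gt (hν'pos n)
    linarith
end

section
/- Let m ≥ 1 and k be natural numbers, let D be a probability mass function on the set of bit strings {0,1}^m with Shannon entropy (in bits) H(D) ≥ h, let g : {0,1}^k → {0,1}^m be any function, and let A be the pushforward under g of the uniform distribution on {0,1}^k. Then the total variation distance satisfies Δ(A, D) ≥ (h − k − 1)/m. -/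
attribute [local instance] Classical.propDecidable


lemma log_ge_one_sub_inv {x : ℝ} (hx : 0 < x) : 1 - x⁻¹ ≤ Real.log x := by
  have h := Real.log_le_sub_one_of_pos (inv_pos.mpr hx)
  rw [Real.log_inv] at h
  linarith

lemma sum_nml_le {ι : Type*} [Fintype ι] (s : ι → ℝ) (hs : ∀ x, 0 ≤ s x)
    (S N : ℝ) (hS : ∑ x, s x = S) (hSpos : 0 < S)
    (hN : ((Finset.univ.filter (fun x => 0 < s x)).card : ℝ) ≤ N) :
    ∑ x, -(s x * Real.log (s x)) ≤ S * Real.log (N / S) := by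
  classical
  set t := Finset.univ.filter (fun x => 0 < s x) with ht
  have hzero : ∀ x, x ∉ t → s x = 0 := by
    intro x hx
    rw [ht, Finset.mem_filter] at hx
    push_neg at hx
    exact le_antisymm (hx (Finset.mem_univ x)) (hs x)
  have hsum_t : ∑ x ∈ t, s x = S := by
    rw [← hS]
    exact Finset.sum_subset (Finset.subset_univ t) (fun x _ hx => hzero x hx)
  have htne : t.Nonempty := by
    by_contra hne
    rw [Finset.not_nonempty_iff_eq_empty] at hne
    rw [hne, Finset.sum_empty] at hsum_t
    linarith
  have hcard1 : (1 : ℝ) ≤ t.card := by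
    have := Finset.card_pos.mpr htne
    exact_mod_cast this
  have hNpos : 0 < N := lt_of_lt_of_le (by linarith) hN
  have hmain : ∑ x, -(s x * Real.log (s x)) = ∑ x ∈ t, -(s x * Real.log (s x)) := by
    refine (Finset.sum_subset (Finset.subset_univ t) ?_).symm
    intro x _ hx
    rw [hzero x hx]; simp
  rw [hmain]
  have key : ∀ x ∈ t, -(s x * Real.log (s x)) ≤ s x * Real.log (N / S) + (S / N - s x) := by
    intro x hx
    rw [ht, Finset.mem_filter] at hx
    have hsx : 0 < s x := hx.2
    have h1 : Real.log (S / (N * s x)) ≤ S / (N * s x) - 1 :=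
      Real.log_le_sub_one_of_pos (by positivity)
    have h2 : Real.log (S / (N * s x)) = Real.log S - (Real.log N + Real.log (s x)) := by
      rw [Real.log_div hSpos.ne' (by positivity), Real.log_mul hNpos.ne' hsx.ne']
    have h3 : Real.log (N / S) = Real.log N - Real.log S :=
      Real.log_div hNpos.ne' hSpos.ne'
    rw [h2] at h1
    have h4 := mul_le_mul_of_nonneg_left h1 hsx.le
    have h5 : s x * (S / (N * s x) - 1) = S / N - s x := by
      field_simp
    rw [h5] at h4
    rw [h3]
    nlinarith
  calc ∑ x ∈ t, -(s x * Real.log (s x))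
      ≤ ∑ x ∈ t, (s x * Real.log (N / S) + (S / N - s x)) := Finset.sum_le_sum key
    _ = S * Real.log (N / S) + ((t.card : ℝ) * (S / N) - S) := by
        rw [Finset.sum_add_distrib, ← Finset.sum_mul, hsum_t, Finset.sum_sub_distrib,
          hsum_t, Finset.sum_const, nsmul_eq_mul]
    _ ≤ S * Real.log (N / S) := by
        have : (t.card : ℝ) * (S / N) ≤ N * (S / N) :=
          mul_le_mul_of_nonneg_right hN (by positivity)
        have hNS : N * (S / N) = S := by field_simp
        nlinarith

lemma nml_add_le {a b : ℝ} (ha : 0 ≤ a) (hb : 0 ≤ b) :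
    -((a + b) * Real.log (a + b)) ≤ -(a * Real.log a) + -(b * Real.log b) := by
  rcases eq_or_lt_of_le ha with h0 | hapos
  · simp [← h0]
  rcases eq_or_lt_of_le hb with h0 | hbpos
  · simp [← h0]
  have hab : 0 < a + b := by linarith
  have h1 : Real.log a ≤ Real.log (a + b) := Real.log_le_log hapos (by linarith)
  have h2 : Real.log b ≤ Real.log (a + b) := Real.log_le_log hbpos (by linarith)
  nlinarith

lemma nml_lower {r s c : ℝ} (hr : 0 ≤ r) (hs : 0 ≤ s) (hc : 0 < c)
    (hsc : s ≤ 1 - c) (hts : r + s ≤ 1) :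
    -(r * Real.log r) + r * Real.log c ≤ -((r + s) * Real.log (r + s)) := by
  rcases eq_or_lt_of_le hr with h0 | hrpos
  · rw [← h0]
    simp only [zero_mul, neg_zero, zero_add, add_zero]
    have : s * Real.log s ≤ 0 := by
      rcases eq_or_lt_of_le hs with h1 | hspos
      · rw [← h1]; simp
      · exact mul_nonpos_of_nonneg_of_nonpos hspos.le
          (Real.log_nonpos hspos.le (by linarith))
    linarith
  have ht : 0 < r + s := by linarith
  have h1 := log_ge_one_sub_inv (x := r / (c * (r + s))) (by positivity)
  rw [inv_div] at h1
  have h2 : Real.log (r + s) ≤ (r + s) - 1 := Real.log_le_sub_one_of_pos ht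
  have hlog : Real.log (r / (c * (r + s))) =
      Real.log r - (Real.log c + Real.log (r + s)) := by
    rw [Real.log_div hrpos.ne' (by positivity), Real.log_mul hc.ne' ht.ne']
  rw [hlog] at h1
  have h4 := mul_le_mul_of_nonneg_left h1 hrpos.le
  have h5 := mul_le_mul_of_nonneg_left h2 hs
  have h6 : r * (1 - c * (r + s) / r) = r - c * (r + s) := by
    field_simp
  rw [h6] at h4
  nlinarith

/-- Let `D` be a PMF on `{0,1}^m` (`m ≥ 1`) with Shannon entropy (in bits) at least `h`,
let `g : {0,1}^k → {0,1}^m` be any function, and let `A` be the pushforward under `g`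
of the uniform distribution on `{0,1}^k`. Then the total variation distance satisfies
`Δ(A, D) ≥ (h - k - 1) / m`. -/
theorem tv_dist_pushforward_uniform_ge (m k : ℕ) (hm : 1 ≤ m)
    (D : (Fin m → Bool) → ℝ)
    (hD0 : ∀ x, 0 ≤ D x) (hD1 : ∑ x, D x = 1)
    (h : ℝ)
    (hH : h ≤ ∑ x ∈ Finset.univ.filter (fun x => 0 < D x),
        -(D x * Real.logb 2 (D x)))
    (g : (Fin k → Bool) → (Fin m → Bool))
    (A : (Fin m → Bool) → ℝ)
    (hA : ∀ y, A y =
        ((Finset.univ.filter (fun r => g r = y)).card : ℝ) / (2 : ℝ) ^ k) :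
    (h - (k : ℝ) - 1) / (m : ℝ) ≤ (1 / 2) * ∑ y, |A y - D y| := by
  classical
  have hL : (0 : ℝ) < Real.log 2 := Real.log_pos (by norm_num)
  set Δ : ℝ := (1 / 2) * ∑ y, |A y - D y| with hΔdef
  -- basic facts about A
  have hA0 : ∀ y, 0 ≤ A y := by
    intro y; rw [hA]; positivity
  have hA1 : ∑ y, A y = 1 := by
    have hfib : (Finset.univ : Finset (Fin k → Bool)).card =
        ∑ y, (Finset.univ.filter (fun r => g r = y)).card :=
      Finset.card_eq_sum_card_fiberwise (fun x _ => Finset.mem_univ _)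
    have hcard : ((Finset.univ : Finset (Fin k → Bool)).card : ℝ) = 2 ^ k := by
      rw [Finset.card_univ]
      simp [Fintype.card_fun]
    calc ∑ y, A y = (∑ y, ((Finset.univ.filter (fun r => g r = y)).card : ℝ)) / 2 ^ k := by
          rw [Finset.sum_div]; exact Finset.sum_congr rfl (fun y _ => hA y)
      _ = 1 := by
          rw [← Nat.cast_sum, ← hfib, hcard]
          field_simp
  -- entropy hypothesis in natural log form
  have hHn : h * Real.log 2 ≤ ∑ y, -(D y * Real.log (D y)) := by
    have e1 : ∑ y, -(D y * Real.log (D y)) =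
        ∑ x ∈ Finset.univ.filter (fun x => 0 < D x), -(D x * Real.log (D x)) := by
      refine (Finset.sum_subset (Finset.subset_univ _) ?_).symm
      intro x _ hx
      rw [Finset.mem_filter] at hx
      push_neg at hx
      have : D x = 0 := le_antisymm (hx (Finset.mem_univ x)) (hD0 x)
      simp [this]
    have e2 : ∀ x, -(D x * Real.logb 2 (D x)) * Real.log 2 = -(D x * Real.log (D x)) := by
      intro x
      rw [Real.logb]
      field_simp
    calc h * Real.log 2 ≤ (∑ x ∈ Finset.univ.filter (fun x => 0 < D x),
          -(D x * Real.logb 2 (D x))) * Real.log 2 :=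
          mul_le_mul_of_nonneg_right hH hL.le
      _ = ∑ x ∈ Finset.univ.filter (fun x => 0 < D x), -(D x * Real.log (D x)) := by
          rw [Finset.sum_mul]
          exact Finset.sum_congr rfl (fun x _ => e2 x)
      _ = ∑ y, -(D y * Real.log (D y)) := e1.symm
    -- H(A) ≤ k * log 2
  have hsuppA : ((Finset.univ.filter (fun y => 0 < A y)).card : ℝ) ≤ (2 : ℝ) ^ k := by
    have hsub : Finset.univ.filter (fun y => 0 < A y) ⊆ Finset.univ.image g := by
      intro y hy
      rw [Finset.mem_filter] at hy
      have hy2 := hy.2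
      rw [hA] at hy2
      have hcpos : 0 < (Finset.univ.filter (fun r => g r = y)).card := by
        rcases Nat.eq_zero_or_pos (Finset.univ.filter (fun r => g r = y)).card with h0 | h0
        · rw [h0] at hy2; norm_num at hy2
        · exact h0
      obtain ⟨r, hr⟩ := Finset.card_pos.mp hcpos
      rw [Finset.mem_filter] at hr
      exact Finset.mem_image.mpr ⟨r, Finset.mem_univ r, hr.2⟩
    have h1 : (Finset.univ.filter (fun y => 0 < A y)).card ≤
        (Finset.univ : Finset (Fin k → Bool)).card :=
      le_trans (Finset.card_le_card hsub) (Finset.card_image_le)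
    have h2 : ((Finset.univ : Finset (Fin k → Bool)).card : ℝ) = 2 ^ k := by
      rw [Finset.card_univ]; simp [Fintype.card_fun]
    calc ((Finset.univ.filter (fun y => 0 < A y)).card : ℝ)
        ≤ ((Finset.univ : Finset (Fin k → Bool)).card : ℝ) := by exact_mod_cast h1
      _ = 2 ^ k := h2
  have hHA : ∑ y, -(A y * Real.log (A y)) ≤ (k : ℝ) * Real.log 2 := by
    have := sum_nml_le A hA0 1 ((2:ℝ)^k) hA1 one_pos hsuppA
    calc ∑ y, -(A y * Real.log (A y)) ≤ 1 * Real.log ((2:ℝ)^k / 1) := this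
      _ = (k : ℝ) * Real.log 2 := by rw [one_mul, div_one, Real.log_pow]
  -- max entropy of D
  have hHD_max : ∑ y, -(D y * Real.log (D y)) ≤ (m : ℝ) * Real.log 2 := by
    have hsupp : ((Finset.univ.filter (fun y => 0 < D y)).card : ℝ) ≤ (2 : ℝ) ^ m := by
      have h1 : (Finset.univ.filter (fun y => 0 < D y)).card ≤
          (Finset.univ : Finset (Fin m → Bool)).card := Finset.card_le_card (Finset.subset_univ _)
      have h2 : ((Finset.univ : Finset (Fin m → Bool)).card : ℝ) = 2 ^ m := by
        rw [Finset.card_univ]; simp [Fintype.card_fun]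
      calc ((Finset.univ.filter (fun y => 0 < D y)).card : ℝ)
          ≤ ((Finset.univ : Finset (Fin m → Bool)).card : ℝ) := by exact_mod_cast h1
        _ = 2 ^ m := h2
    have := sum_nml_le D hD0 1 ((2:ℝ)^m) hD1 one_pos hsupp
    calc ∑ y, -(D y * Real.log (D y)) ≤ 1 * Real.log ((2:ℝ)^m / 1) := this
      _ = (m : ℝ) * Real.log 2 := by rw [one_mul, div_one, Real.log_pow]
  have hΔ0 : 0 ≤ Δ := by
    rw [hΔdef]
    have : 0 ≤ ∑ y, |A y - D y| := Finset.sum_nonneg (fun y _ => abs_nonneg _)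
    linarith
  have hmpos : (0 : ℝ) < m := by exact_mod_cast hm
  rw [div_le_iff₀ hmpos]
  -- goal : h - k - 1 ≤ Δ * m
  -- Suffices: h ≤ k + Δ * m + 1
  suffices hfin : h * Real.log 2 ≤ ((k : ℝ) + Δ * m + 1) * Real.log 2 by
    have := (mul_le_mul_iff_of_pos_right hL).mp hfin
    linarith
  rcases le_or_gt Δ 0 with hΔle | hΔpos
  · -- Δ = 0 : A = D
    have hΔz : Δ = 0 := le_antisymm hΔle hΔ0
    have hsum0 : ∑ y, |A y - D y| = 0 := by
      rw [hΔdef] at hΔz; linarith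
    have hAD : ∀ y, D y = A y := by
      intro y
      have := (Finset.sum_eq_zero_iff_of_nonneg (fun y _ => abs_nonneg (A y - D y))).mp
        hsum0 y (Finset.mem_univ y)
      have := abs_eq_zero.mp this
      linarith
    have : ∑ y, -(D y * Real.log (D y)) = ∑ y, -(A y * Real.log (A y)) :=
      Finset.sum_congr rfl (fun y _ => by rw [hAD y])
    rw [hΔz]
    nlinarith [hHn, hHA]
  rcases le_or_gt 1 Δ with hΔge | hΔlt
  · -- Δ ≥ 1 : use H(D) ≤ m log 2
    have h1 : h * Real.log 2 ≤ (m : ℝ) * Real.log 2 := le_trans hHn hHD_max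
    have : (m : ℝ) ≤ (k : ℝ) + Δ * m + 1 := by nlinarith
    nlinarith
  -- main case 0 < Δ < 1
  set c : ℝ := 1 - Δ with hc
  have hcpos : 0 < c := by rw [hc]; linarith
  set r : (Fin m → Bool) → ℝ := fun y => min (D y) (A y) with hrdef
  set s : (Fin m → Bool) → ℝ := fun y => D y - r y with hsdef
  set s' : (Fin m → Bool) → ℝ := fun y => A y - r y with hs'def
  have hr0 : ∀ y, 0 ≤ r y := fun y => le_min (hD0 y) (hA0 y)
  have hs0 : ∀ y, 0 ≤ s y := fun y => by
    simp only [hsdef, hrdef]; simp [min_le_left]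
  have hs'0 : ∀ y, 0 ≤ s' y := fun y => by
    simp only [hs'def, hrdef]; simp [min_le_right]
  have habs : ∀ y, s y = ((D y - A y) + |A y - D y|) / 2 := by
    intro y
    rcases le_total (D y) (A y) with hle | hle
    · have h1 : r y = D y := min_eq_left hle
      have h2 : |A y - D y| = A y - D y := abs_of_nonneg (by linarith)
      simp only [hsdef]; rw [h1, h2]; ring
    · have h1 : r y = A y := min_eq_right hle
      have h2 : |A y - D y| = -(A y - D y) := abs_of_nonpos (by linarith)
      simp only [hsdef]; rw [h1, h2]; ring
  have hsub_sum : ∑ y, (D y - A y) = 0 := by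
    rw [Finset.sum_sub_distrib, hD1, hA1]; ring
  have hsum_s : ∑ y, s y = Δ := by
    calc ∑ y, s y = ∑ y, ((D y - A y) + |A y - D y|) / 2 :=
          Finset.sum_congr rfl (fun y _ => habs y)
      _ = ((∑ y, (D y - A y)) + ∑ y, |A y - D y|) / 2 := by
          rw [← Finset.sum_add_distrib, ← Finset.sum_div]
      _ = Δ := by rw [hsub_sum, hΔdef]; ring
  have hsum_s' : ∑ y, s' y = Δ := by
    have : ∀ y, s' y = s y - (D y - A y) := by
      intro y; simp only [hs'def, hsdef]; ring
    calc ∑ y, s' y = ∑ y, (s y - (D y - A y)) := Finset.sum_congr rfl (fun y _ => this y)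
      _ = Δ - 0 := by rw [Finset.sum_sub_distrib, hsum_s, hsub_sum]
      _ = Δ := by ring
  have hsum_r : ∑ y, r y = c := by
    have : ∀ y, r y = D y - s y := by intro y; simp only [hsdef]; ring
    calc ∑ y, r y = ∑ y, (D y - s y) := Finset.sum_congr rfl (fun y _ => this y)
      _ = 1 - Δ := by rw [Finset.sum_sub_distrib, hD1, hsum_s]
  -- step 1: subadditivity
  have step1 : ∑ y, -(D y * Real.log (D y)) ≤
      (∑ y, -(r y * Real.log (r y))) + ∑ y, -(s y * Real.log (s y)) := by
    rw [← Finset.sum_add_distrib]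
    refine Finset.sum_le_sum (fun y _ => ?_)
    have : D y = r y + s y := by simp only [hsdef]; ring
    rw [this]
    exact nml_add_le (hr0 y) (hs0 y)
  -- step 2: bound on ∑ η(s)
  have hcard2m : ((Finset.univ.filter (fun y => 0 < s y)).card : ℝ) ≤ (2 : ℝ) ^ m := by
    have h1 : (Finset.univ.filter (fun y => 0 < s y)).card ≤
        (Finset.univ : Finset (Fin m → Bool)).card := Finset.card_le_card (Finset.subset_univ _)
    have h2 : ((Finset.univ : Finset (Fin m → Bool)).card : ℝ) = 2 ^ m := by
      rw [Finset.card_univ]; simp [Fintype.card_fun]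
    calc ((Finset.univ.filter (fun y => 0 < s y)).card : ℝ)
        ≤ ((Finset.univ : Finset (Fin m → Bool)).card : ℝ) := by exact_mod_cast h1
      _ = 2 ^ m := h2
  have step2 : ∑ y, -(s y * Real.log (s y)) ≤
      Δ * ((m : ℝ) * Real.log 2) + -(Δ * Real.log Δ) := by
    have := sum_nml_le s hs0 Δ ((2:ℝ)^m) hsum_s hΔpos hcard2m
    have hlog : Real.log ((2:ℝ)^m / Δ) = (m : ℝ) * Real.log 2 - Real.log Δ := by
      rw [Real.log_div (by positivity) hΔpos.ne', Real.log_pow]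
    rw [hlog] at this
    nlinarith
  -- step 3: ∑ η(r) ≤ ∑ η(A) - c log c
  have hAle1 : ∀ y, A y ≤ 1 := by
    intro y
    rw [← hA1]
    exact Finset.single_le_sum (fun i _ => hA0 i) (Finset.mem_univ y)
  have hs'le : ∀ y, s' y ≤ Δ := by
    intro y
    rw [← hsum_s']
    exact Finset.single_le_sum (fun i _ => hs'0 i) (Finset.mem_univ y)
  have step3 : (∑ y, -(r y * Real.log (r y))) + c * Real.log c ≤
      ∑ y, -(A y * Real.log (A y)) := by
    have key : ∀ y, -(r y * Real.log (r y)) + r y * Real.log c ≤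
        -(A y * Real.log (A y)) := by
      intro y
      have hAy : A y = r y + s' y := by simp only [hs'def]; ring
      rw [hAy]
      exact nml_lower (hr0 y) (hs'0 y) hcpos (by have := hs'le y; rw [hc]; linarith)
        (by have := hAle1 y; rw [← hAy]; linarith [hAy ▸ this])
    calc (∑ y, -(r y * Real.log (r y))) + c * Real.log c
        = ∑ y, (-(r y * Real.log (r y)) + r y * Real.log c) := by
          rw [Finset.sum_add_distrib, ← Finset.sum_mul, hsum_r]
      _ ≤ ∑ y, -(A y * Real.log (A y)) := Finset.sum_le_sum (fun y _ => key y)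
  -- binary entropy bound
  have hbin : -(Δ * Real.log Δ) + -(c * Real.log c) ≤ Real.log 2 := by
    have h01 : ∑ b : Bool, (if b then Δ else c) = 1 := by
      rw [Fintype.sum_bool]; simp [hc]
    have hcardb : ((Finset.univ.filter
        (fun b : Bool => 0 < (if b then Δ else c))).card : ℝ) ≤ (2 : ℝ) := by
      have := Finset.card_filter_le (Finset.univ : Finset Bool)
        (fun b : Bool => 0 < (if b then Δ else c))
      have h2 : (Finset.univ : Finset Bool).card = 2 := by simp
      calc ((Finset.univ.filter (fun b : Bool => 0 < (if b then Δ else c))).card : ℝ)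
          ≤ ((Finset.univ : Finset Bool).card : ℝ) := by exact_mod_cast this
        _ = 2 := by rw [h2]; norm_num
    have hres := sum_nml_le (fun b : Bool => if b then Δ else c)
      (fun b => by by_cases hb : b <;> simp [hb] <;> linarith) 1 2 h01 one_pos hcardb
    rw [Fintype.sum_bool] at hres
    norm_num at hres
    linarith [hres]
  -- combine
  calc h * Real.log 2 ≤ ∑ y, -(D y * Real.log (D y)) := hHn
    _ ≤ (∑ y, -(r y * Real.log (r y))) + ∑ y, -(s y * Real.log (s y)) := step1
    _ ≤ ((∑ y, -(A y * Real.log (A y))) - c * Real.log c) +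
        (Δ * ((m : ℝ) * Real.log 2) + -(Δ * Real.log Δ)) := by
        have := step3
        have := step2
        linarith
    _ ≤ ((k : ℝ) * Real.log 2 - c * Real.log c) +
        (Δ * ((m : ℝ) * Real.log 2) + -(Δ * Real.log Δ)) := by linarith [hHA]
    _ ≤ (k : ℝ) * Real.log 2 + Δ * ((m : ℝ) * Real.log 2) + Real.log 2 := by
        linarith [hbin]
    _ = ((k : ℝ) + Δ * m + 1) * Real.log 2 := by ring
end
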